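/- Let F be a field of characteristic 0 and let f = f(X_1, …, X_n) ∈ F⟨X_1, …, X_n⟩. Then tr(f(A_1, …, A_n)) = 0 for all A_1, …, A_n ∈ M_d(F) and all d ≥ 2 if and only if f is a sum of commutators in F⟨X_1, …, X_n⟩ (i.e., f is cyclically equivalent to 0). -/

import Mathlib

set_option linter.unusedSectionVars false
namespace Stmt15Aux
set_option maxHeartbeats 1000000
variable {F : Type*} [Field F] [CharZero F] {n : ℕ}
def N (F : Type*) [Field F] (n : ℕ) : AddSubgroup (FreeAlgebra F (Fin n)) :=
  AddSubgroup.closure {x : FreeAlgebra F (Fin n) | ∃ p q, x = p * q - q * p}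
noncomputable abbrev e (F : Type*) [Field F] (n : ℕ) :
    FreeAlgebra F (Fin n) ≃ₐ[F] MonoidAlgebra F (FreeMonoid (Fin n)) :=
  FreeAlgebra.equivMonoidAlgebraFreeMonoid
noncomputable def co (f : FreeAlgebra F (Fin n)) (w : List (Fin n)) : F :=
  (e F n f).coeff (FreeMonoid.ofList w)
noncomputable def ofW (w : List (Fin n)) : FreeAlgebra F (Fin n) :=
  (w.map (FreeAlgebra.ι F)).prod
lemma comm_mem (p q : FreeAlgebra F (Fin n)) : p * q - q * p ∈ N F n :=
  AddSubgroup.subset_closure ⟨p, q, rfl⟩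
lemma ofW_append (x y : List (Fin n)) : (ofW (x ++ y) : FreeAlgebra F (Fin n)) = ofW x * ofW y := by
  simp [ofW, List.prod_append]
lemma e_ofW (w : List (Fin n)) :
    e F n (ofW w) = MonoidAlgebra.single (FreeMonoid.ofList w) 1 := by
  induction w with
  | nil => simpa [ofW] using (MonoidAlgebra.one_def)
  | cons i v ih =>
    have : (ofW (i :: v) : FreeAlgebra F (Fin n)) = FreeAlgebra.ι F i * ofW v := by
      simp [ofW]
    rw [this, map_mul, ih]
    have hι : e F n (FreeAlgebra.ι F i) = MonoidAlgebra.single (FreeMonoid.of i) 1 := by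
      simp [e, FreeAlgebra.equivMonoidAlgebraFreeMonoid]
    rw [hι, MonoidAlgebra.single_mul_single, one_mul]
    congr 1

lemma rotate_diff_mem (a : F) (w : List (Fin n)) (v : List (Fin n)) (h : w ~r v) :
    a • (ofW w : FreeAlgebra F (Fin n)) - a • ofW v ∈ N F n := by
  obtain ⟨m, hm, rfl⟩ := List.isRotated_iff_mod.1 h
  have h1 : (ofW w : FreeAlgebra F (Fin n)) = ofW (w.take m) * ofW (w.drop m) := by
    rw [← ofW_append, List.take_append_drop]
  have h2 : (ofW (w.rotate m) : FreeAlgebra F (Fin n)) = ofW (w.drop m) * ofW (w.take m) := by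
    rw [List.rotate_eq_drop_append_take hm, ofW_append]
  rw [h1, h2, ← smul_mul_assoc, ← mul_smul_comm]
  exact comm_mem _ _

lemma f_eq_sum (f : FreeAlgebra F (Fin n)) :
    f = ∑ u ∈ (e F n f).coeff.support, co f u.toList • ofW u.toList := by
  apply (e F n).injective
  rw [map_sum]
  have hc : ∀ u ∈ (e F n f).coeff.support,
      e F n (co f u.toList • ofW u.toList) = MonoidAlgebra.single u ((e F n f).coeff u) := by
    intro u _
    rw [map_smul, e_ofW, FreeMonoid.ofList_toList, co, FreeMonoid.ofList_toList,
      MonoidAlgebra.smul_single', mul_one]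
  rw [Finset.sum_congr rfl hc]
  exact (MonoidAlgebra.sum_coeff_single (e F n f)).symm


section Comb
variable (co : List (Fin n) → F)
def orb (w : List (Fin n)) : Finset (List (Fin n)) :=
  (Finset.range w.length).image (w.rotate ·)

lemma card_fiber_const (w : List (Fin n)) (hw : w ≠ []) (v : List (Fin n)) (hv : v ∈ orb w) :
    ((Finset.range w.length).filter fun s => w.rotate s = v).card =
      ((Finset.range w.length).filter fun s => w.rotate s = w).card := by
  classical
  set k := w.length with hk
  have hk0 : 0 < k := List.length_pos_iff.2 hw
  obtain ⟨t, ht, rfl⟩ := Finset.mem_image.1 hv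
  rw [Finset.mem_range] at ht
  refine (Finset.card_bij' (fun s _ => (s + t) % k) (fun s _ => (s + (k - t)) % k) ?_ ?_ ?_ ?_).symm
  · intro s hs
    rw [Finset.mem_filter, Finset.mem_range] at hs ⊢
    refine ⟨Nat.mod_lt _ hk0, ?_⟩
    rw [List.rotate_mod, ← List.rotate_rotate, hs.2]
  · intro s hs
    rw [Finset.mem_filter, Finset.mem_range] at hs ⊢
    refine ⟨Nat.mod_lt _ hk0, ?_⟩
    rw [List.rotate_mod, ← List.rotate_rotate, hs.2, List.rotate_rotate]
    have : t + (k - t) = k := Nat.add_sub_cancel' ht.le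
    rw [this, List.rotate_length]
  · intro s hs
    rw [Finset.mem_filter, Finset.mem_range] at hs
    show ((s + t) % k + (k - t)) % k = s
    rw [Nat.mod_add_mod, add_assoc]
    have : t + (k - t) = k := Nat.add_sub_cancel' ht.le
    rw [this, Nat.add_mod_right, Nat.mod_eq_of_lt hs.1]
  · intro s hs
    rw [Finset.mem_filter, Finset.mem_range] at hs
    show ((s + (k - t)) % k + t) % k = s
    rw [Nat.mod_add_mod]
    have : k - t + t = k := Nat.sub_add_cancel ht.le
    rw [add_assoc, this, Nat.add_mod_right, Nat.mod_eq_of_lt hs.1]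

lemma classSum_of_rotSum'
    (h : ∀ w : List (Fin n), ∑ s ∈ Finset.range w.length, co (w.rotate s) = 0)
    (w : List (Fin n)) (hw : w ≠ []) : ∑ v ∈ orb w, co v = 0 := by
  classical
  have hk0 : 0 < w.length := List.length_pos_iff.2 hw
  have hcomp := Finset.sum_comp (s := Finset.range w.length) co (w.rotate ·)
  rw [h w] at hcomp
  rw [show Finset.image (fun x => w.rotate x) (Finset.range w.length) = orb w from rfl] at hcomp
  set m := ((Finset.range w.length).filter fun s => w.rotate s = w).card with hm
  have hconst : ∀ v ∈ orb w,
      ((Finset.range w.length).filter fun s => w.rotate s = v).card • co v = m • co v := by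
    intro v hv
    rw [card_fiber_const w hw v hv]
  rw [Finset.sum_congr rfl hconst] at hcomp
  have : (0 : F) = m • ∑ v ∈ orb w, co v := by
    rw [Finset.smul_sum]; exact hcomp
  have hm0 : m ≠ 0 := by
    rw [hm]
    refine Finset.card_ne_zero.2 ⟨0, ?_⟩
    simp [hk0]
  rw [nsmul_eq_mul] at this
  have := this.symm
  rcases mul_eq_zero.1 this with h1 | h1
  · exact absurd (Nat.cast_eq_zero.1 h1) hm0
  · exact h1

end Comb



noncomputable def rep (l : List (Fin n)) : List (Fin n) :=
  (Quotient.mk (List.IsRotated.setoid (Fin n)) l).out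

lemma rep_rotated (l : List (Fin n)) : rep l ~r l :=
  Quotient.exact (Quotient.out_eq (Quotient.mk (List.IsRotated.setoid (Fin n)) l))

lemma rep_const {l m : List (Fin n)} (h : l ~r m) : rep l = rep m := by
  unfold rep
  rw [Quotient.sound h]

lemma mem_N_of_classSums (f : FreeAlgebra F (Fin n)) (h0 : co f [] = 0)
    (h : ∀ w : List (Fin n), w ≠ [] → ∑ v ∈ orb w, co f v = 0) : f ∈ N F n := by
  classical
  set T := (e F n f).coeff.support with hT
  have hmem : f - ∑ u ∈ T, co f u.toList • ofW (rep u.toList) ∈ N F n := by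
    have hd : f - ∑ u ∈ T, co f u.toList • ofW (rep u.toList)
        = ∑ u ∈ T, (co f u.toList • ofW u.toList - co f u.toList • ofW (rep u.toList)) := by
      rw [Finset.sum_sub_distrib]
      congr 1
      exact f_eq_sum f
    rw [hd]
    exact AddSubgroup.sum_mem _ fun u _ =>
      rotate_diff_mem _ _ _ (rep_rotated u.toList).symm
  have hzero : ∑ u ∈ T, co f u.toList • ofW (rep u.toList) = (0 : FreeAlgebra F (Fin n)) := by
    rw [← Finset.sum_fiberwise_of_maps_to
      (g := fun u => rep (FreeMonoid.toList u)) (t := T.image fun u => rep u.toList)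
      (fun u hu => Finset.mem_image_of_mem _ hu)]
    refine Finset.sum_eq_zero fun w hw => ?_
    obtain ⟨u0, hu0T, hu0⟩ := Finset.mem_image.1 hw
    have hfib : ∀ u ∈ T.filter (fun u => rep (FreeMonoid.toList u) = w),
        co f u.toList • ofW (rep u.toList) = co f u.toList • (ofW w : FreeAlgebra F (Fin n)) := by
      intro u hu
      rw [(Finset.mem_filter.1 hu).2]
    rw [Finset.sum_congr rfl hfib, ← Finset.sum_smul]
    convert zero_smul F _
    -- remains: sum of coefficients over the fiber is zero
    by_cases hnil : u0.toList = []
    · refine Finset.sum_eq_zero fun u hu => ?_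
      rw [Finset.mem_filter] at hu
      have : u.toList ~r u0.toList := by
        have h1 : rep u.toList = rep u0.toList := by rw [hu.2, ← hu0]
        exact (rep_rotated u.toList).symm.trans (h1 ▸ rep_rotated u0.toList)
      rw [hnil, List.isRotated_nil_iff] at this
      rw [this]; exact h0
    · have hk0 : 0 < u0.toList.length := List.length_pos_iff.2 hnil
      have hsum := h u0.toList hnil
      rw [← hsum]
      have hsub : ∑ v ∈ orb u0.toList, co f v
          = ∑ v ∈ (orb u0.toList).filter (fun v => FreeMonoid.ofList v ∈ T), co f v := by
        refine (Finset.sum_filter_of_ne fun v _ hv => ?_).symm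
        by_contra hvT
        exact hv (Finsupp.notMem_support_iff.1 hvT)
      rw [hsub]
      refine Finset.sum_nbij' (fun u => FreeMonoid.toList u) (fun v => FreeMonoid.ofList v)
        ?_ ?_ ?_ ?_ ?_
      · intro u hu
        rw [Finset.mem_filter] at hu
        rw [Finset.mem_filter]
        constructor
        · have h1 : rep u.toList = rep u0.toList := by rw [hu.2, ← hu0]
          have h2 : rep u0.toList ~r u.toList := by rw [← h1]; exact rep_rotated u.toList
          have hrot : u0.toList ~r u.toList := (rep_rotated u0.toList).symm.trans h2
          obtain ⟨m, hm, hrot'⟩ := List.isRotated_iff_mod.1 hrot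
          refine Finset.mem_image.2 ⟨m % u0.toList.length,
            Finset.mem_range.2 (Nat.mod_lt _ hk0), ?_⟩
          rw [List.rotate_mod, hrot']
        · rw [FreeMonoid.ofList_toList]; exact hu.1
      · intro v hv
        rw [Finset.mem_filter] at hv
        rw [Finset.mem_filter]
        refine ⟨hv.2, ?_⟩
        obtain ⟨m, _, rfl⟩ := Finset.mem_image.1 hv.1
        have hrot : FreeMonoid.toList (FreeMonoid.ofList (u0.toList.rotate m)) ~r u0.toList := by
          rw [FreeMonoid.toList_ofList]
          exact (List.isRotated_iff_mod.2 ⟨m % u0.toList.length, (Nat.mod_lt _ hk0).le,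
            by rw [List.rotate_mod]⟩).symm
        show rep (FreeMonoid.toList (FreeMonoid.ofList (u0.toList.rotate m))) = w
        rw [rep_const hrot, hu0]
      · intro u _; exact FreeMonoid.ofList_toList u
      · intro v _; exact FreeMonoid.toList_ofList v
      · intro u _; rfl
  rw [hzero, sub_zero] at hmem
  exact hmem




def Aw (w : List (Fin n)) (i : Fin n) : Matrix (Fin (w.length + 1)) (Fin (w.length + 1)) F :=
  Matrix.of fun x y =>
    if (x : ℕ) < w.length ∧ w.getD x i = i ∧ (y : ℕ) = ((x : ℕ) + 1) % w.length then 1 else 0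

lemma Aw_prod_apply (w : List (Fin n)) (u : List (Fin n)) (hu : u ≠ [])
    (x y : Fin (w.length + 1)) :
    (u.map (Aw (F := F) w)).prod x y =
      if (x : ℕ) < w.length ∧ (y : ℕ) = ((x : ℕ) + u.length) % w.length ∧
          ∀ j : Fin u.length, w.getD (((x : ℕ) + (j : ℕ)) % w.length) (u.get j) = u.get j
      then 1 else 0 := by
  induction u generalizing x with
  | nil => exact absurd rfl hu
  | cons i v ih =>
    by_cases hv : v = []
    · subst hv
      simp only [List.map_cons, List.map_nil, List.prod_cons, List.prod_nil, mul_one]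
      show (if (x : ℕ) < w.length ∧ w.getD x i = i ∧ (y : ℕ) = ((x : ℕ) + 1) % w.length then (1:F) else 0) = _
      congr 1
      simp only [List.length_cons, List.length_nil, Nat.zero_add, eq_iff_iff]
      constructor
      · rintro ⟨h1, h2, h3⟩
        refine ⟨h1, h3, ?_⟩
        intro j
        have : (j : ℕ) = 0 := by omega
        have hj0 : j = (0 : Fin 1) := by ext; simpa using this
        subst hj0
        simpa [Nat.mod_eq_of_lt h1] using h2
      · rintro ⟨h1, h2, h3⟩
        refine ⟨h1, ?_, h2⟩
        have := h3 0
        simpa [Nat.mod_eq_of_lt h1] using this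
    · -- inductive step
      by_cases hk : w.length = 0
      · -- everything is zero
      -- LHS
        rw [List.map_cons, List.prod_cons, Matrix.mul_apply]
        rw [if_neg (by omega : ¬((x : ℕ) < w.length ∧ _ ∧ _))]
        refine Finset.sum_eq_zero fun z _ => ?_
        show (if (x : ℕ) < w.length ∧ _ ∧ _ then (1:F) else 0) * _ = 0
        rw [if_neg (by omega), zero_mul]
      · have hk0 : 0 < w.length := Nat.pos_of_ne_zero hk
        rw [List.map_cons, List.prod_cons, Matrix.mul_apply]
        by_cases hx : (x : ℕ) < w.length ∧ w.getD x i = i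
        · set z0 : Fin (w.length + 1) := ⟨((x : ℕ) + 1) % w.length, lt_of_lt_of_le (Nat.mod_lt _ hk0) (Nat.le_succ _)⟩ with hz0
          have hsum : ∑ z, (Aw (F := F) w i x z) * (v.map (Aw (F := F) w)).prod z y
              = (v.map (Aw (F := F) w)).prod z0 y := by
            rw [Finset.sum_eq_single z0]
            · rw [show Aw (F := F) w i x z0 = 1 from if_pos ⟨hx.1, hx.2, rfl⟩, one_mul]
            · intro z _ hz
              have : Aw (F := F) w i x z = 0 := by
                apply if_neg
                rintro ⟨-, -, h3⟩
                exact hz (Fin.ext h3)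
              rw [this, zero_mul]
            · intro h; exact absurd (Finset.mem_univ _) h
          rw [hsum, ih hv z0]
          simp only [hz0, Fin.val_mk]
          congr 1
          simp only [eq_iff_iff, List.length_cons]
          have hz0v : (z0 : ℕ) = ((x : ℕ) + 1) % w.length := rfl
          constructor
          · rintro ⟨-, h2, h3⟩
            refine ⟨hx.1, ?_, ?_⟩
            · rw [h2, Nat.mod_add_mod]; congr 1; omega
            · intro j
              rcases Fin.eq_zero_or_eq_succ j with rfl | ⟨j', rfl⟩
              · simpa [Nat.mod_eq_of_lt hx.1] using hx.2
              · have := h3 j'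
                rw [Nat.mod_add_mod] at this
                have harg : (x : ℕ) + 1 + (j' : ℕ) = (x : ℕ) + (j'.succ : ℕ) := by
                  simp [Fin.val_succ]; omega
                rw [harg] at this
                simpa using this
          · rintro ⟨h1, h2, h3⟩
            refine ⟨Nat.mod_lt _ hk0, ?_, ?_⟩
            · rw [h2, Nat.mod_add_mod]; congr 1; omega
            · intro j
              have := h3 j.succ
              rw [Nat.mod_add_mod]
              have harg : (x : ℕ) + 1 + (j : ℕ) = (x : ℕ) + (j.succ : ℕ) := by
                simp [Fin.val_succ]; omega
              rw [harg]
              simpa using this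
        · -- row of A i at x is zero, and RHS condition fails
          have hL : ∑ z, (Aw (F := F) w i x z) * (v.map (Aw (F := F) w)).prod z y = 0 := by
            refine Finset.sum_eq_zero fun z _ => ?_
            have : Aw (F := F) w i x z = 0 := by
              apply if_neg
              rintro ⟨h1, h2, -⟩
              exact hx ⟨h1, h2⟩
            rw [this, zero_mul]
          rw [hL]
          rw [if_neg]
          rintro ⟨h1, -, h3⟩
          refine hx ⟨h1, ?_⟩
          have := h3 ⟨0, by simp⟩
          simpa [Nat.mod_eq_of_lt h1] using this
  




lemma rotate_eq_iff_match (w u : List (Fin n)) (hlen : u.length = w.length)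
    (hk0 : 0 < w.length) (x : ℕ) :
    (∀ j : Fin u.length, w.getD ((x + (j : ℕ)) % w.length) (u.get j) = u.get j) ↔
      w.rotate x = u := by
  constructor
  · intro h
    apply List.ext_get
    · rw [List.length_rotate, hlen]
    · intro j h1 h2
      rw [List.get_rotate]
      have := h ⟨j, h2⟩
      rw [List.getD_eq_getElem _ _ (Nat.mod_lt _ hk0)] at this
      simp only [List.get_eq_getElem] at this ⊢
      rw [← this]
      congr 1
      rw [Nat.add_comm]
  · rintro rfl
    intro j
    have hj : (j : ℕ) < (w.rotate x).length := j.2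
    rw [List.getD_eq_getElem _ _ (Nat.mod_lt _ hk0)]
    simp only [List.get_eq_getElem, List.getElem_rotate, List.length_rotate]
    congr 1
    rw [Nat.add_comm]

lemma trace_Aw_prod (w : List (Fin n)) (hw : w ≠ []) (u : List (Fin n))
    (hlen : u.length = w.length) :
    Matrix.trace ((u.map (Aw (F := F) w)).prod) =
      (((Finset.range w.length).filter fun s => w.rotate s = u).card : F) := by
  classical
  have hk0 : 0 < w.length := List.length_pos_iff.2 hw
  have hu : u ≠ [] := by
    intro h; rw [h] at hlen; simp at hlen; omega
  have hterm : ∀ x : Fin (w.length + 1), (u.map (Aw (F := F) w)).prod x x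
      = if (x : ℕ) < w.length ∧ w.rotate x = u then 1 else 0 := by
    intro x
    rw [Aw_prod_apply w u hu]
    congr 1
    simp only [eq_iff_iff]
    constructor
    · rintro ⟨h1, -, h3⟩
      exact ⟨h1, (rotate_eq_iff_match w u hlen hk0 x).1 h3⟩
    · rintro ⟨h1, h2⟩
      refine ⟨h1, ?_, (rotate_eq_iff_match w u hlen hk0 x).2 h2⟩
      rw [hlen, Nat.add_mod_right, Nat.mod_eq_of_lt h1]
  rw [Matrix.trace]
  simp only [Matrix.diag]
  rw [Finset.sum_congr rfl fun x _ => hterm x]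
  rw [Fin.sum_univ_eq_sum_range (fun s => if s < w.length ∧ w.rotate s = u then (1:F) else 0)]
  rw [Finset.sum_range_succ, if_neg (by omega), add_zero]
  have hstep : ∑ s ∈ Finset.range w.length, (if s < w.length ∧ w.rotate s = u then (1:F) else 0)
      = ∑ s ∈ Finset.range w.length, (if w.rotate s = u then (1:F) else 0) := by
    refine Finset.sum_congr rfl fun s hs => ?_
    rw [Finset.mem_range] at hs
    simp [hs]
  rw [hstep, Finset.sum_boole]




lemma lift_eq_sum {d : ℕ} (A : Fin n → Matrix (Fin d) (Fin d) F) (f : FreeAlgebra F (Fin n)) :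
    FreeAlgebra.lift F A f =
      (e F n f).coeff.sum fun u a => a • ((u.toList.map A).prod) := by
  have key : (FreeAlgebra.lift F A) =
      ((MonoidAlgebra.lift F _ (FreeMonoid (Fin n))) (FreeMonoid.lift A)).comp
        (e F n).toAlgHom := by
    apply FreeAlgebra.hom_ext
    funext i
    simp [e, FreeAlgebra.equivMonoidAlgebraFreeMonoid]
  rw [key]
  simp only [AlgHom.comp_apply, AlgEquiv.toAlgHom_eq_coe, AlgHom.coe_coe]
  rw [MonoidAlgebra.lift_apply]
  refine Finsupp.sum_congr fun u _ => ?_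
  rw [FreeMonoid.lift_apply]

lemma scale_prod {d : ℕ} (A : Fin n → Matrix (Fin d) (Fin d) F) (t : F) (u : List (Fin n)) :
    (u.map (fun i => t • A i)).prod = t ^ u.length • (u.map A).prod := by
  induction u with
  | nil => simp
  | cons i v ih =>
    simp only [List.map_cons, List.prod_cons, ih, List.length_cons]
    rw [smul_mul_assoc, mul_smul_comm, smul_smul, pow_succ, mul_comm]

lemma trace_lift {d : ℕ} (A : Fin n → Matrix (Fin d) (Fin d) F) (f : FreeAlgebra F (Fin n)) :
    Matrix.trace (FreeAlgebra.lift F A f) =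
      ∑ u ∈ (e F n f).coeff.support, (e F n f).coeff u * Matrix.trace ((u.toList.map A).prod) := by
  rw [lift_eq_sum, Finsupp.sum, Matrix.trace_sum]
  refine Finset.sum_congr rfl fun u _ => ?_
  rw [Matrix.trace_smul, smul_eq_mul]

lemma co_nil_eq_zero (f : FreeAlgebra F (Fin n))
    (H : ∀ d : ℕ, 2 ≤ d → ∀ A : Fin n → Matrix (Fin d) (Fin d) F,
        Matrix.trace (FreeAlgebra.lift F A f) = 0) : co f [] = 0 := by
  classical
  have h2 := H 2 le_rfl (fun _ => 0)
  rw [trace_lift] at h2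
  rw [Finset.sum_eq_single (1 : FreeMonoid (Fin n))] at h2
  · have htr : Matrix.trace ((((1 : FreeMonoid (Fin n)).toList).map
        (fun _ : Fin n => (0 : Matrix (Fin 2) (Fin 2) F))).prod) = 2 := by
      simp [FreeMonoid.toList_one, Matrix.trace_one]
    rw [htr] at h2
    have : (e F n f).coeff 1 = 0 := by
      have h22 : (2 : F) ≠ 0 := two_ne_zero
      exact (mul_eq_zero.1 h2).resolve_right h22
    rw [co]
    exact this
  · intro b _ hb
    have hnil : b.toList ≠ [] := by
      intro hcon
      apply hb
      have := congrArg FreeMonoid.ofList hcon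
      rwa [FreeMonoid.ofList_toList] at this
    have : (0 : Matrix (Fin 2) (Fin 2) F) ∈ (b.toList.map
        (fun _ : Fin n => (0 : Matrix (Fin 2) (Fin 2) F))) := by
      rcases List.exists_mem_of_ne_nil b.toList hnil with ⟨i, hi⟩
      exact List.mem_map.2 ⟨i, hi, rfl⟩
    rw [List.prod_eq_zero this]
    simp
  · intro h1
    rw [Finsupp.notMem_support_iff.1 h1, zero_mul]

lemma rotSum_eq_zero (f : FreeAlgebra F (Fin n))
    (H : ∀ d : ℕ, 2 ≤ d → ∀ A : Fin n → Matrix (Fin d) (Fin d) F,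
        Matrix.trace (FreeAlgebra.lift F A f) = 0) (w : List (Fin n)) :
    ∑ s ∈ Finset.range w.length, co f (w.rotate s) = 0 := by
  classical
  rcases eq_or_ne w [] with rfl | hw
  · simp
  have hk0 : 0 < w.length := List.length_pos_iff.2 hw
  set T := (e F n f).coeff.support with hT
  set P : Polynomial F := ∑ u ∈ T,
      Polynomial.C ((e F n f).coeff u * Matrix.trace ((u.toList.map (Aw (F := F) w)).prod)) *
        Polynomial.X ^ u.toList.length with hP
  have heval : ∀ t : F, P.eval t = 0 := by
    intro t
    have hH := H (w.length + 1) (by omega) (fun i => t • Aw (F := F) w i)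
    rw [trace_lift] at hH
    rw [← hH, hP, Polynomial.eval_finset_sum]
    refine Finset.sum_congr rfl fun u _ => ?_
    rw [Polynomial.eval_mul, Polynomial.eval_C, Polynomial.eval_pow, Polynomial.eval_X]
    rw [scale_prod, Matrix.trace_smul, smul_eq_mul]
    ring
  have hP0 : P = 0 := Polynomial.funext fun r => by rw [heval r, Polynomial.eval_zero]
  have hcoeff : P.coeff w.length = 0 := by rw [hP0, Polynomial.coeff_zero]
  rw [hP, Polynomial.finset_sum_coeff] at hcoeff
  have hcoeff2 : ∑ u ∈ T, (e F n f).coeff u *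
      Matrix.trace ((u.toList.map (Aw (F := F) w)).prod) *
      (if w.length = u.toList.length then (1:F) else 0) = 0 := by
    refine Eq.trans ?_ hcoeff
    refine Finset.sum_congr rfl fun u _ => ?_
    rw [Polynomial.coeff_C_mul, Polynomial.coeff_X_pow]
  have hkey : ∑ s ∈ Finset.range w.length, co f (w.rotate s)
      = ∑ u ∈ T, (e F n f).coeff u *
          Matrix.trace ((u.toList.map (Aw (F := F) w)).prod) *
          (if w.length = u.toList.length then (1:F) else 0) := by
    have step1 : ∀ s ∈ Finset.range w.length, co f (w.rotate s)
        = ∑ u ∈ T, (if u = FreeMonoid.ofList (w.rotate s) then (e F n f).coeff u else 0) := by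
      intro s _
      rw [Finset.sum_ite_eq' T (FreeMonoid.ofList (w.rotate s)) (fun u => (e F n f).coeff u)]
      rw [co]
      split_ifs with h
      · rfl
      · exact Finsupp.notMem_support_iff.1 h
    rw [Finset.sum_congr rfl step1, Finset.sum_comm]
    refine Finset.sum_congr rfl fun u hu => ?_
    have hiff : ∀ s : ℕ, (u = FreeMonoid.ofList (w.rotate s)) = (w.rotate s = u.toList) := by
      intro s
      apply propext
      constructor
      · rintro rfl; rw [FreeMonoid.toList_ofList]
      · intro h
        exact ((congrArg FreeMonoid.ofList h).trans (FreeMonoid.ofList_toList u)).symm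
    simp only [hiff]
    rw [← Finset.sum_filter]
    rw [Finset.sum_const, nsmul_eq_mul]
    by_cases hlen : u.toList.length = w.length
    · rw [trace_Aw_prod w hw u.toList hlen, if_pos hlen.symm, mul_one, mul_comm]
    · rw [if_neg (fun hcon => hlen hcon.symm), mul_zero]
      have hempty : (Finset.range w.length).filter (fun s => w.rotate s = u.toList)
          = ∅ := by
        refine Finset.filter_eq_empty_iff.2 fun s _ hcon => ?_
        apply hlen
        rw [← hcon, List.length_rotate]
      rw [hempty, Finset.card_empty, Nat.cast_zero, zero_mul]
  rw [hkey]
  exact hcoeff2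

lemma trace_eq_zero_of_mem (f : FreeAlgebra F (Fin n)) (hf : f ∈ N F n) {d : ℕ}
    (A : Fin n → Matrix (Fin d) (Fin d) F) :
    Matrix.trace (FreeAlgebra.lift F A f) = 0 := by
  induction hf using AddSubgroup.closure_induction with
  | mem x hx =>
    obtain ⟨p, q, rfl⟩ := hx
    rw [map_sub, map_mul, map_mul, Matrix.trace_sub, Matrix.trace_mul_comm, sub_self]
  | zero => simp
  | add x y _ _ hx hy => rw [map_add, Matrix.trace_add, hx, hy, add_zero]
  | neg x _ hx => rw [map_neg, Matrix.trace_neg, hx, neg_zero]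

end Stmt15Aux

/-- **Corollary 4.7 (dimension-free tracial Nullstellensatz).** Let `F` be a field of
characteristic `0` and `f ∈ F⟨X₁,…,Xₙ⟩`.  Then `tr(f(A₁,…,Aₙ)) = 0` for all
`Aᵢ ∈ M_d(F)` and all `d ≥ 2` iff `f` is a sum of commutators in `F⟨X₁,…,Xₙ⟩`
(i.e. `f` is cyclically equivalent to `0`). -/
theorem stmt_15 (F : Type*) [Field F] [CharZero F] (n : ℕ) (f : FreeAlgebra F (Fin n)) :
    (∀ d : ℕ, 2 ≤ d → ∀ A : Fin n → Matrix (Fin d) (Fin d) F,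
        Matrix.trace (FreeAlgebra.lift F A f) = 0) ↔
      f ∈ AddSubgroup.closure
            {x : FreeAlgebra F (Fin n) | ∃ p q, x = p * q - q * p} := by
  constructor
  · intro H
    exact Stmt15Aux.mem_N_of_classSums f (Stmt15Aux.co_nil_eq_zero f H)
      (fun w hw => Stmt15Aux.classSum_of_rotSum' (Stmt15Aux.co f)
        (Stmt15Aux.rotSum_eq_zero f H) w hw)
  · intro hf d _ A
    exact Stmt15Aux.trace_eq_zero_of_mem f hf A
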